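/- For every m ≥ 0, the Schur polynomial B_m agrees with the Rogers–Ramanujan series H through degree m−1: viewing both as elements of the formal power series ring ℤ⟦q⟧, one has H(q) − B_m(q) ∈ q^m·ℤ⟦q⟧, i.e. the coefficient of q^j in B_m equals the coefficient of q^j in H for all 0 ≤ j < m. -/

import Mathlib

noncomputable section

open PowerSeries

/-- `(q;q)_n = ∏_{j=1}^n (1 - q^j)` in `ℤ⟦q⟧`; its constant term is `1`, so it is
invertible in `ℤ⟦q⟧`. -/
def qqPoch (n : ℕ) : PowerSeries ℤ :=
  ∏ j ∈ Finset.range n, (1 - (PowerSeries.X : PowerSeries ℤ) ^ (j + 1))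

/-- The Gaussian binomial coefficient `[r choose n]_q = (q;q)_r/((q;q)_n (q;q)_{r-n})`
for `0 ≤ n ≤ r`, and `0` otherwise. -/
def qBinom (r n : ℕ) : PowerSeries ℤ :=
  if n ≤ r then qqPoch r * PowerSeries.invOfUnit (qqPoch n * qqPoch (r - n)) 1 else 0

/-- The Schur polynomial `B_m(q) = Σ_{n≥0} q^{n(n+1)} [m−n choose n]_q`. -/
def schurB (m : ℕ) : PowerSeries ℤ :=
  ∑ n ∈ Finset.range (m + 1),
    (PowerSeries.X : PowerSeries ℤ) ^ (n * (n + 1)) * qBinom (m - n) n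

/-- The Rogers–Ramanujan series `H(q) = Σ_{n≥0} q^{n(n+1)}/(q;q)_n ∈ ℤ⟦q⟧`, defined
coefficientwise: the coefficient of `q^j` only involves the terms with `n(n+1) ≤ j`,
so the partial sum over `n ≤ j` determines it. -/
def RRHseries : PowerSeries ℤ :=
  PowerSeries.mk fun j => PowerSeries.coeff j
    (∑ n ∈ Finset.range (j + 1),
      (PowerSeries.X : PowerSeries ℤ) ^ (n * (n + 1)) * PowerSeries.invOfUnit (qqPoch n) 1)

lemma cc_qqPoch (n : ℕ) : constantCoeff (qqPoch n) = 1 := by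
  simp [qqPoch]

lemma poch_mul_inv (n : ℕ) : qqPoch n * invOfUnit (qqPoch n) 1 = 1 :=
  mul_invOfUnit _ 1 (by simp [cc_qqPoch])

lemma invUnique {f g : PowerSeries ℤ} (h : f * g = 1) (hc : constantCoeff f = 1) :
    invOfUnit f 1 = g := by
  have h1 : f * invOfUnit f 1 = 1 := mul_invOfUnit f 1 (by simpa using hc)
  calc invOfUnit f 1 = invOfUnit f 1 * (f * g) := by rw [h, mul_one]
    _ = g * (f * invOfUnit f 1) := by ring
    _ = g := by rw [h1, mul_one]

lemma inv_mul (a b : ℕ) : invOfUnit (qqPoch a * qqPoch b) 1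
    = invOfUnit (qqPoch a) 1 * invOfUnit (qqPoch b) 1 :=
  invUnique (by
    calc qqPoch a * qqPoch b * (invOfUnit (qqPoch a) 1 * invOfUnit (qqPoch b) 1)
        = (qqPoch a * invOfUnit (qqPoch a) 1) * (qqPoch b * invOfUnit (qqPoch b) 1) := by ring
      _ = 1 := by rw [poch_mul_inv, poch_mul_inv, one_mul])
    (by simp [cc_qqPoch])

lemma dvd_prod_sub_one (k n : ℕ) :
    (X : PowerSeries ℤ) ^ (k + 1) ∣
      (∏ j ∈ Finset.range n, (1 - (X : PowerSeries ℤ) ^ (k + j + 1))) - 1 := by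
  induction n with
  | zero => simp
  | succ n ih =>
    rw [Finset.prod_range_succ]
    have heq : (∏ j ∈ Finset.range n, (1 - (X : PowerSeries ℤ) ^ (k + j + 1)))
          * (1 - (X : PowerSeries ℤ) ^ (k + n + 1)) - 1
        = ((∏ j ∈ Finset.range n, (1 - (X : PowerSeries ℤ) ^ (k + j + 1))) - 1)
            * (1 - (X : PowerSeries ℤ) ^ (k + n + 1)) - (X : PowerSeries ℤ) ^ (k + n + 1) := by
      ring
    rw [heq]
    exact dvd_sub (ih.mul_right _) (pow_dvd_pow _ (by omega))

lemma qqPoch_add (a n : ℕ) :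
    qqPoch (a + n) = qqPoch a * ∏ j ∈ Finset.range n, (1 - (X : PowerSeries ℤ) ^ (a + j + 1)) := by
  rw [qqPoch, qqPoch, Finset.prod_range_add]

lemma qBinom_close (m n : ℕ) (h : 2 * n ≤ m) :
    (X : PowerSeries ℤ) ^ (m - 2 * n + 1) ∣ qBinom (m - n) n - invOfUnit (qqPoch n) 1 := by
  set a := m - 2 * n with ha
  have hn : n ≤ m - n := by omega
  have hsub : m - n - n = a := by omega
  have hr : m - n = a + n := by omega
  rw [qBinom, if_pos hn, hsub, inv_mul, hr, qqPoch_add a n]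
  set T := ∏ j ∈ Finset.range n, (1 - (X : PowerSeries ℤ) ^ (a + j + 1)) with hT
  have heq : qqPoch a * T * (invOfUnit (qqPoch n) 1 * invOfUnit (qqPoch a) 1)
        - invOfUnit (qqPoch n) 1
      = (T - 1) * invOfUnit (qqPoch n) 1 * (qqPoch a * invOfUnit (qqPoch a) 1)
        + (qqPoch a * invOfUnit (qqPoch a) 1 - 1) * invOfUnit (qqPoch n) 1 := by ring
  rw [heq, poch_mul_inv a]
  simp only [mul_one, sub_self, zero_mul, add_zero]
  exact (dvd_prod_sub_one a n).mul_right _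

lemma coeff_close (m n d : ℕ) (h2 : 2 * n ≤ m) (hd : d ≤ m - 2 * n) :
    PowerSeries.coeff d (qBinom (m - n) n) = PowerSeries.coeff d (invOfUnit (qqPoch n) 1) := by
  have h := X_pow_dvd_iff.mp (qBinom_close m n h2) d (by omega)
  rw [map_sub] at h
  exact sub_eq_zero.mp h

/-- `B_m` agrees with `H` through degree `m−1`:  `H − B_m ∈ q^m ℤ⟦q⟧`, i.e. the
coefficients of `q^j` in `B_m` and in `H` coincide for all `j < m`. -/
theorem schurB_agrees_with_RRH (m : ℕ) :
    (PowerSeries.X : PowerSeries ℤ) ^ m ∣ RRHseries - schurB m ∧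
    ∀ j : ℕ, j < m → PowerSeries.coeff j (schurB m) = PowerSeries.coeff j RRHseries := by
  have key : ∀ j : ℕ, j < m →
      PowerSeries.coeff j (schurB m) = PowerSeries.coeff j RRHseries := by
    intro j hj
    have hterm : ∀ n ∈ Finset.range (m + 1),
        PowerSeries.coeff j ((X : PowerSeries ℤ) ^ (n * (n + 1)) * qBinom (m - n) n)
        = PowerSeries.coeff j
            ((X : PowerSeries ℤ) ^ (n * (n + 1)) * invOfUnit (qqPoch n) 1) := by
      intro n _
      by_cases hle : n * (n + 1) ≤ j
      · obtain ⟨d, rfl⟩ : ∃ d, j = d + n * (n + 1) := ⟨j - n * (n + 1), by omega⟩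
        rw [coeff_X_pow_mul, coeff_X_pow_mul]
        have hnn : 2 * n ≤ n * (n + 1) := by
          rcases Nat.eq_zero_or_pos n with h0 | h0
          · simp [h0]
          · have : 1 ≤ n := h0
            nlinarith
        exact coeff_close m n d (by omega) (by omega)
      · rw [X_pow_dvd_iff.mp (dvd_mul_right _ _) j (by omega),
          X_pow_dvd_iff.mp (dvd_mul_right _ _) j (by omega)]
    have h1 : PowerSeries.coeff j (schurB m)
        = ∑ n ∈ Finset.range (m + 1),
          PowerSeries.coeff j
            ((X : PowerSeries ℤ) ^ (n * (n + 1)) * invOfUnit (qqPoch n) 1) := by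
      rw [schurB, map_sum]
      exact Finset.sum_congr rfl hterm
    have h2 : PowerSeries.coeff j RRHseries
        = ∑ n ∈ Finset.range (j + 1),
          PowerSeries.coeff j
            ((X : PowerSeries ℤ) ^ (n * (n + 1)) * invOfUnit (qqPoch n) 1) := by
      rw [RRHseries, coeff_mk, map_sum]
    rw [h1, h2]
    symm
    apply Finset.sum_subset
    · exact Finset.range_subset_range.mpr (by omega)
    · intro n _ hn
      have hnj : j < n := by
        simp only [Finset.mem_range, not_lt] at hn
        omega
      exact X_pow_dvd_iff.mp (dvd_mul_right _ _) j (by nlinarith)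
  refine ⟨?_, key⟩
  rw [X_pow_dvd_iff]
  intro j hj
  rw [map_sub, key j hj, sub_self]
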